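/- Let $d = r + qp$ with $0 \leq r < p$. For $1 \leq m \leq n-1$, define $D_{d,n}^{(m)} = p^{n-1}(S_d^{(m)} - (p-1)\sum_{l=m+1}^{n-1}p^{m-l}S_d^{(l)})$ (an $n$-level invariant) and similarly $D_{e,n-1}^{(m-1)} = p^{n-2}(S_e^{(m-1)} - (p-1)\sum_{l=m}^{n-2}p^{m-1-l}S_e^{(l)})$ for the $(n-1)$-level. Then $D_{d,n}^{(m)} = p\big(r\,D_{q+1,n-1}^{(m-1)} + (p-r)\,D_{q,n-1}^{(m-1)}\big)$. -/

import Mathlib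

/-- Sum of the `(m+1)`-th base-`p` digits of `0, 1, ..., d-1`. -/
def digitSum (p d m : ℕ) : ℕ := ∑ i ∈ Finset.range d, i / p ^ m % p

/-- The invariant `D_d^{(m)} = p^{n-1}(S_d^{(m)} - (p-1) ∑_{l=m+1}^{n-1} p^{m-l} S_d^{(l)})`. -/
def Dinv (p n d m : ℕ) : ℚ :=
  (p : ℚ) ^ (n - 1) * ((digitSum p d m : ℚ) -
    ((p : ℚ) - 1) * ∑ l ∈ Finset.Icc (m + 1) (n - 1),
      (p : ℚ) ^ ((m : ℤ) - (l : ℤ)) * (digitSum p d l : ℚ))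

lemma digitSum_succ (p d m : ℕ) :
    digitSum p (d + 1) m = digitSum p d m + d / p ^ m % p := Finset.sum_range_succ _ _

lemma keyQ (p : ℕ) (hp : 0 < p) (m d : ℕ) :
    (digitSum p d (m + 1) : ℚ) = (d % p : ℕ) * (digitSum p (d / p + 1) m : ℚ)
      + ((p : ℚ) - (d % p : ℕ)) * (digitSum p (d / p) m : ℚ) := by
  induction d with
  | zero => simp [digitSum]
  | succ d ih =>
    have hr : d % p < p := Nat.mod_lt _ hp
    have hdd : d / p ^ (m + 1) = (d / p) / p ^ m := by
      rw [pow_succ', Nat.div_div_eq_div_mul]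
    have hD : (digitSum p (d / p + 1) m : ℚ)
        = digitSum p (d / p) m + ((d / p) / p ^ m % p : ℕ) := by
      rw [digitSum_succ]; push_cast; ring
    rcases Nat.lt_or_ge (d % p + 1) p with h | h
    · have he : d + 1 = (d % p + 1) + (d / p) * p := by
        conv_lhs => rw [← Nat.div_add_mod d p]
        ring
      have h1 : (d + 1) % p = d % p + 1 := by
        rw [he, Nat.add_mul_mod_self_right, Nat.mod_eq_of_lt h]
      have h2 : (d + 1) / p = d / p := by
        rw [he, Nat.add_mul_div_right _ _ hp, Nat.div_eq_of_lt h, Nat.zero_add]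
      rw [digitSum_succ, h1, h2, hdd]
      push_cast
      push_cast [hdd, hD] at ih ⊢
      linear_combination ih
    · have hrp : d % p + 1 = p := by omega
      have he : d + 1 = (d / p + 1) * p := by
        conv_lhs => rw [← Nat.div_add_mod d p]
        rw [add_assoc, hrp]; ring
      have h1 : (d + 1) % p = 0 := by rw [he, Nat.mul_mod_left]
      have h2 : (d + 1) / p = d / p + 1 := by rw [he, Nat.mul_div_cancel _ hp]
      rw [digitSum_succ, h1, h2, hdd]
      have hrQ : ((d % p : ℕ) : ℚ) = (p : ℚ) - 1 := by
        have h3 : d % p = p - 1 := by omega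
        rw [h3, Nat.cast_sub hp, Nat.cast_one]
      push_cast [hD, hrQ] at ih ⊢
      linear_combination ih

theorem stmt8 (p n d m : ℕ) (hp : p.Prime) (hn : 2 ≤ n) (hd1 : 1 ≤ d) (hd2 : d ≤ p ^ n)
    (hm1 : 1 ≤ m) (hm2 : m ≤ n - 1) (r q : ℕ) (hr : r = d % p) (hq : q = d / p) :
    Dinv p n d m =
      p * (r * Dinv p (n - 1) (q + 1) (m - 1) + (p - r : ℚ) * Dinv p (n - 1) q (m - 1)) := by
  subst hr hq
  have hp0 : 0 < p := hp.pos
  obtain ⟨t, rfl⟩ : ∃ t, n = t + 2 := ⟨n - 2, by omega⟩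
  obtain ⟨j, rfl⟩ : ∃ j, m = j + 1 := ⟨m - 1, by omega⟩
  unfold Dinv
  simp only [show t + 2 - 1 = t + 1 from rfl, show j + 1 + 1 = j + 2 from rfl,
    Nat.add_sub_cancel, show t + 1 - 1 = t from rfl, show j + 1 - 1 = j from rfl]
  have himg : Finset.Icc (j + 2) (t + 1) = Finset.image (· + 1) (Finset.Icc (j + 1) t) := by
    rw [Finset.image_add_right_Icc]
  rw [himg, Finset.sum_image (by intro x _ y _ h; simpa using h)]
  have hsum : ∀ l ∈ Finset.Icc (j + 1) t,
      (p : ℚ) ^ (((j + 1 : ℕ) : ℤ) - ((l + 1 : ℕ) : ℤ)) * (digitSum p d (l + 1) : ℚ)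
        = (d % p : ℕ) * ((p : ℚ) ^ (((j + 1 : ℕ) : ℤ) - ((l + 1 : ℕ) : ℤ)) * (digitSum p (d / p + 1) l : ℚ))
          + ((p : ℚ) - (d % p : ℕ)) * ((p : ℚ) ^ (((j + 1 : ℕ) : ℤ) - ((l + 1 : ℕ) : ℤ)) * (digitSum p (d / p) l : ℚ)) := by
    intro l _
    rw [keyQ p hp0 l d]; ring
  rw [Finset.sum_congr rfl hsum, Finset.sum_add_distrib, ← Finset.mul_sum, ← Finset.mul_sum]
  have hexp : ∀ l, (((j + 1 : ℕ) : ℤ) - ((l + 1 : ℕ) : ℤ)) = ((j : ℕ) : ℤ) - ((l : ℕ) : ℤ) := by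
    intro l; push_cast; ring
  simp only [hexp]
  rw [keyQ p hp0 j d]
  ring
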